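/- Let Y be a nonzero Hermitian eigenmatrix of M with eigenvalue α and tr(Y) = 0. Then α is real and satisfies 1 - α = [∫ Ψ (G*YG)²/(G*Λ_∘G)²] / tr[(Λ_∘^{-1/4} Y Λ_∘^{-1/4})²]. In particular α ≤ 1, with α = 1 if and only if G*YG ≡ 0 on the unit circle. -/

import Mathlib

open Matrix MeasureTheory Real Filter
open scoped ComplexOrder

noncomputable section

abbrev Mat (n : ℕ) := Matrix (Fin n) (Fin n) ℂ
abbrev Vec (n : ℕ) := Matrix (Fin n) (Fin 1) ℂ

/-- the point e^{jθ} on the unit circle -/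
def circPt (θ : ℝ) : ℂ := Complex.exp (θ * Complex.I)

/-- G(e^{jθ}) = (e^{jθ} I - A)⁻¹ B -/
def Gm {n : ℕ} (A : Mat n) (B : Vec n) (θ : ℝ) : Vec n :=
  (circPt θ • (1 : Mat n) - A)⁻¹ * B

/-- the scalar G* Λ G at e^{jθ} -/
def quad {n : ℕ} (A : Mat n) (B : Vec n) (Λ : Mat n) (θ : ℝ) : ℂ :=
  ((Gm A B θ)ᴴ * Λ * Gm A B θ) 0 0

/-- normalized entrywise matrix integral over the unit circle -/
def mInt {n : ℕ} (f : ℝ → Mat n) : Mat n :=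
  Matrix.of fun i j => (1 / (2 * π) : ℝ) • ∫ θ in (0:ℝ)..(2 * π), f θ i j

/-- normalized scalar (complex) integral over the unit circle -/
def sInt (f : ℝ → ℂ) : ℂ := (1 / (2 * π) : ℝ) • ∫ θ in (0:ℝ)..(2 * π), f θ

/-- normalized scalar (real) integral over the unit circle -/
def sIntR (f : ℝ → ℝ) : ℝ := (1 / (2 * π)) * ∫ θ in (0:ℝ)..(2 * π), f θ

/-- all eigenvalues of A lie in the open unit disc -/
def IsStable {n : ℕ} (A : Mat n) : Prop := ∀ μ ∈ spectrum ℂ A, ‖μ‖ < 1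

/-- (A,B) is a reachable pair: the controllability matrix has full rank -/
def Reachable {n : ℕ} (A : Mat n) (B : Vec n) : Prop :=
  (Matrix.of fun (i : Fin n) (k : Fin n) => (A ^ (k : ℕ) * B) i 0).rank = n

/-- the old Mathlib `Matrix.PosSemidef.sqrt` (removed since), with its old definition -/
def psdSqrt {n : ℕ} {M : Mat n} (hM : M.PosSemidef) : Mat n :=
  hM.1.eigenvectorUnitary.1 * diagonal ((↑) ∘ (√·) ∘ hM.1.eigenvalues) *
  (star hM.1.eigenvectorUnitary : Mat n)

open scoped Classical in
/-- positive semidefinite square root (junk value 0 off the psd cone) -/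
def msqrt {n : ℕ} (M : Mat n) : Mat n :=
  if h : M.PosSemidef then psdSqrt h else 0

/-- the moment map ∫ G (Ψ/(G*ΛG)) G* -/
def moment {n : ℕ} (A : Mat n) (B : Vec n) (Ψ : ℝ → ℝ) (Λ : Mat n) : Mat n :=
  mInt (fun θ => ((Ψ θ : ℂ) / quad A B Λ θ) • (Gm A B θ * (Gm A B θ)ᴴ))

/-- the iteration map Θ(Λ) = ∫ Λ^{1/2} G (Ψ/(G*ΛG)) G* Λ^{1/2} -/
def Theta {n : ℕ} (A : Mat n) (B : Vec n) (Ψ : ℝ → ℝ) (Λ : Mat n) : Mat n :=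
  mInt (fun θ => ((Ψ θ : ℂ) / quad A B Λ θ) •
    (msqrt Λ * (Gm A B θ * (Gm A B θ)ᴴ) * msqrt Λ))

/-- the linearization M of Θ at Λ:
M(X) = X - Λ^{1/2} ∫ (GΨG*/(G*ΛG)) (G*XG/(G*ΛG)) Λ^{1/2} -/
def Mlin {n : ℕ} (A : Mat n) (B : Vec n) (Ψ : ℝ → ℝ) (Λ : Mat n) (X : Mat n) : Mat n :=
  X - msqrt Λ * mInt (fun θ =>
    (((Ψ θ : ℂ) * (((Gm A B θ)ᴴ * X * Gm A B θ) 0 0)) / (quad A B Λ θ) ^ 2) •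
      (Gm A B θ * (Gm A B θ)ᴴ)) * msqrt Λ

/-- the range of the operator Γ : Φ ↦ ∫ G Φ G* on continuous (2π-periodic) functions -/
def RangeGamma {n : ℕ} (A : Mat n) (B : Vec n) : Set (Mat n) :=
  {M | ∃ Φ : ℝ → ℝ, Continuous Φ ∧ (∀ θ, Φ (θ + 2 * π) = Φ θ) ∧
    M = mInt (fun θ => (Φ θ : ℂ) • (Gm A B θ * (Gm A B θ)ᴴ))}


section Helpers

lemma psdSqrt_posSemidef {n : ℕ} {M : Mat n} (hM : M.PosSemidef) : (psdSqrt hM).PosSemidef := by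
  unfold psdSqrt
  have hd : (diagonal ((↑) ∘ (√·) ∘ hM.1.eigenvalues) : Mat n).PosSemidef :=
    PosSemidef.diagonal (fun i => by
      simp only [Pi.zero_apply, Function.comp_apply]
      exact Complex.zero_le_real.mpr (Real.sqrt_nonneg _))
  have := hd.mul_mul_conjTranspose_same (hM.1.eigenvectorUnitary.1)
  simpa [star_eq_conjTranspose] using this

lemma psdSqrt_mul_self {n : ℕ} {M : Mat n} (hM : M.PosSemidef) : psdSqrt hM * psdSqrt hM = M := by
  unfold psdSqrt
  have hU : (star hM.1.eigenvectorUnitary : Mat n) * hM.1.eigenvectorUnitary.1 = 1 := by simp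
  have h := hM.1.spectral_theorem
  simp only [Unitary.conjStarAlgAut_apply] at h
  calc _ = hM.1.eigenvectorUnitary.1 * (diagonal ((↑) ∘ (√·) ∘ hM.1.eigenvalues) *
        ((star hM.1.eigenvectorUnitary : Mat n) * hM.1.eigenvectorUnitary.1) *
        diagonal ((↑) ∘ (√·) ∘ hM.1.eigenvalues)) * (star hM.1.eigenvectorUnitary : Mat n) := by
          simp only [mul_assoc]
    _ = hM.1.eigenvectorUnitary.1 * diagonal (RCLike.ofReal ∘ hM.1.eigenvalues) *
        (star hM.1.eigenvectorUnitary : Mat n) := by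
          rw [hU, mul_one, diagonal_mul_diagonal]
          congr 3
          funext i
          simp only [Function.comp_apply]
          rw [← Complex.ofReal_mul, Real.mul_self_sqrt (hM.eigenvalues_nonneg i)]
          rfl
    _ = M := h.symm

lemma isUnit_shift {n : ℕ} (A : Mat n) (hA : IsStable A) (θ : ℝ) :
    IsUnit (circPt θ • (1 : Mat n) - A) := by
  by_contra h
  have hmem : circPt θ ∈ spectrum ℂ A := by
    rw [spectrum.mem_iff, Algebra.algebraMap_eq_smul_one]; exact h
  have := hA _ hmem
  simp [circPt, Complex.norm_exp] at this

lemma det_shift_ne {n : ℕ} (A : Mat n) (hA : IsStable A) (θ : ℝ) :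
    (circPt θ • (1 : Mat n) - A).det ≠ 0 := by
  have := (Matrix.isUnit_iff_isUnit_det _).mp (isUnit_shift A hA θ)
  exact this.ne_zero

lemma continuous_circPt : Continuous circPt := by
  unfold circPt; fun_prop

lemma continuous_Gm {n : ℕ} (A : Mat n) (B : Vec n) (hA : IsStable A) :
    Continuous fun θ => Gm A B θ := by
  have hM : Continuous fun θ : ℝ => circPt θ • (1 : Mat n) - A :=
    (continuous_circPt.smul continuous_const).sub continuous_const
  have hdet : Continuous fun θ => (circPt θ • (1 : Mat n) - A).det := hM.matrix_det
  have hinv : Continuous fun θ => (circPt θ • (1 : Mat n) - A)⁻¹ := by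
    simp_rw [Matrix.inv_def, Ring.inverse_eq_inv']
    exact (hdet.inv₀ (det_shift_ne A hA)).smul hM.matrix_adjugate
  exact hinv.matrix_mul continuous_const

lemma circPt_periodic (θ : ℝ) : circPt (θ + 2 * π) = circPt θ := by
  unfold circPt
  push_cast
  rw [add_mul, Complex.exp_add, Complex.exp_two_pi_mul_I, mul_one]

lemma key_trace {n : ℕ} (T Y J : Mat n) (β : ℂ)
    (hTQ : T * T⁻¹ = 1) (hQT : T⁻¹ * T = 1)
    (hβ : β • Y = (T*T) * J * (T*T)) :
    β * ((T⁻¹ * Y * T⁻¹)^2).trace = (J * Y).trace := by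
  have e3 : T⁻¹ * ((T*T) * J * (T*T)) * T⁻¹ = T * J * T := by
    simp only [← mul_assoc]
    rw [hQT, one_mul, mul_assoc (T*J*T) T T⁻¹, hTQ, mul_one]
  have e2 : β • ((T⁻¹*Y*T⁻¹) * (T⁻¹*Y*T⁻¹)) = (T⁻¹*Y*T⁻¹) * (T * J * T) := by
    rw [← e3, ← hβ]
    simp only [Matrix.mul_smul, Matrix.smul_mul, mul_smul_comm]
  have e4 : (T⁻¹*Y*T⁻¹) * (T * J * T) = ((T⁻¹*Y)*J)*T := by
    simp only [← mul_assoc]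
    rw [mul_assoc (T⁻¹*Y) T⁻¹ T, hQT, mul_one]
  calc β * ((T⁻¹ * Y * T⁻¹)^2).trace = (β • ((T⁻¹*Y*T⁻¹) * (T⁻¹*Y*T⁻¹))).trace := by
        rw [Matrix.trace_smul, sq]; simp
    _ = (((T⁻¹*Y)*J)*T).trace := by rw [e2, e4]
    _ = (T*((T⁻¹*Y)*J)).trace := (Matrix.trace_mul_comm _ _)
    _ = (Y*J).trace := by rw [← mul_assoc, ← mul_assoc, hTQ, one_mul]
    _ = (J * Y).trace := Matrix.trace_mul_comm _ _

lemma trace_mInt_mul {n : ℕ} (f : ℝ → Mat n) (Y : Mat n)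
    (hint : ∀ i j, IntervalIntegrable (fun θ => f θ i j) volume 0 (2*π)) :
    (mInt f * Y).trace = sInt (fun θ => (f θ * Y).trace) := by
  have hsum : ∀ i : Fin n, IntervalIntegrable (fun θ => ∑ j, f θ i j * Y j i) volume 0 (2*π) := by
    intro i
    have h := IntervalIntegrable.sum (μ := volume) (a := (0:ℝ)) (b := 2*π) Finset.univ
      (f := fun (j : Fin n) => fun θ => f θ i j * Y j i) (fun j _ => (hint i j).mul_const _)
    rwa [Finset.sum_fn] at h
  unfold mInt sInt
  simp only [Matrix.trace, Matrix.diag, Matrix.mul_apply, Matrix.of_apply]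
  have h1 : (∫ θ in (0:ℝ)..(2*π), ∑ i, ∑ j, f θ i j * Y j i)
      = ∑ i, ∑ j, (∫ θ in (0:ℝ)..(2*π), f θ i j) * Y j i := by
    rw [intervalIntegral.integral_finset_sum
      (f := fun (i : Fin n) (θ : ℝ) => ∑ j, f θ i j * Y j i) (fun i _ => hsum i)]
    refine Finset.sum_congr rfl fun i _ => ?_
    rw [intervalIntegral.integral_finset_sum
      (f := fun (j : Fin n) (θ : ℝ) => f θ i j * Y j i)
      (fun j _ => (hint i j).mul_const _)]
    exact Finset.sum_congr rfl fun j _ => intervalIntegral.integral_mul_const _ _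
  rw [h1, Finset.smul_sum]
  refine Finset.sum_congr rfl fun i _ => ?_
  rw [Finset.smul_sum]
  exact Finset.sum_congr rfl fun j _ => smul_mul_assoc _ _ _

lemma entry_real {n : ℕ} (G : Vec n) (M : Mat n) (hM : M.IsHermitian) :
    ((Gᴴ * M * G) 0 0) = (((Gᴴ * M * G) 0 0).re : ℂ) := by
  have h : (Gᴴ * M * G)ᴴ = Gᴴ * M * G := by
    simp only [Matrix.conjTranspose_mul, Matrix.conjTranspose_conjTranspose, hM.eq]
    rw [Matrix.mul_assoc]
  have h2 : (starRingEnd ℂ) ((Gᴴ * M * G) 0 0) = (Gᴴ * M * G) 0 0 := by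
    calc (starRingEnd ℂ) ((Gᴴ * M * G) 0 0) = (Gᴴ * M * G)ᴴ 0 0 :=
          (Matrix.conjTranspose_apply _ 0 0).symm
      _ = (Gᴴ * M * G) 0 0 := by rw [h]
  exact (Complex.conj_eq_iff_re.mp h2).symm

lemma trace_sq_hermitian {n : ℕ} (H : Mat n) (hH : H.IsHermitian) :
    (H^2).trace = ((∑ i, ∑ j, Complex.normSq (H i j) : ℝ) : ℂ) := by
  rw [sq]
  simp only [Matrix.trace, Matrix.diag, Matrix.mul_apply]
  push_cast
  refine Finset.sum_congr rfl fun i _ => Finset.sum_congr rfl fun j _ => ?_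
  have hji : H j i = (starRingEnd ℂ) (H i j) := by
    rw [← hH.eq, Matrix.conjTranspose_apply, hH.eq]
    rfl
  rw [hji, Complex.mul_conj]

end Helpers

/-- eigenvalues of M on traceless eigenmatrices are real, satisfy
(1-α) tr[(Λ^{-1/4} Y Λ^{-1/4})²] = ∫ Ψ (G*YG)²/(G*ΛG)², hence α ≤ 1, with
α = 1 iff G*YG ≡ 0 on the circle. -/
theorem stmt14 {n : ℕ} (A : Mat n) (B : Vec n) (Ψ : ℝ → ℝ) (Λ : Mat n)
    (hA : IsStable A) (hR : Reachable A B)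
    (hΨc : Continuous Ψ) (hΨpos : ∀ θ, 0 < Ψ θ)
    (hΛ : Λ.PosDef)
    (hq : ∀ θ, 0 < (quad A B Λ θ).re)
    (hmom : moment A B Ψ Λ = 1)
    (Y : Mat n) (α : ℂ) (hY : Y.IsHermitian) (hY0 : Y ≠ 0)
    (heig : Mlin A B Ψ Λ Y = α • Y) (htr : Y.trace = 0) :
    α.im = 0 ∧
    (1 - α) * (((msqrt (msqrt Λ))⁻¹ * Y * (msqrt (msqrt Λ))⁻¹) ^ 2).trace =
      sInt (fun θ => (Ψ θ : ℂ) * (((Gm A B θ)ᴴ * Y * Gm A B θ) 0 0) ^ 2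
        / (quad A B Λ θ) ^ 2) ∧
    α.re ≤ 1 ∧
    (α = 1 ↔ ∀ θ : ℝ, (Gm A B θ)ᴴ * Y * Gm A B θ = 0) := by
  classical
  unfold Mlin at heig
  set S := msqrt Λ with hSdef
  set T := msqrt S with hTdef
  set J := mInt (fun θ =>
    (((Ψ θ : ℂ) * (((Gm A B θ)ᴴ * Y * Gm A B θ) 0 0)) / (quad A B Λ θ) ^ 2) •
      (Gm A B θ * (Gm A B θ)ᴴ)) with hJdef
  have hΛps : Λ.PosSemidef := hΛ.posSemidef
  have hS : S = psdSqrt hΛps := by rw [hSdef]; unfold msqrt; exact dif_pos hΛps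
  have hSps : S.PosSemidef := by rw [hS]; exact psdSqrt_posSemidef hΛps
  have hSmul : S * S = Λ := by rw [hS]; exact psdSqrt_mul_self hΛps
  have hT : T = psdSqrt hSps := by rw [hTdef]; unfold msqrt; exact dif_pos hSps
  have hTps : T.PosSemidef := by rw [hT]; exact psdSqrt_posSemidef hSps
  have hTmul : T * T = S := by rw [hT]; exact psdSqrt_mul_self hSps
  have hdetΛ : Λ.det ≠ 0 := hΛ.det_pos.ne'
  have hdetS : S.det ≠ 0 := fun h => hdetΛ (by rw [← hSmul, Matrix.det_mul, h, mul_zero])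
  have hdetT : T.det ≠ 0 := fun h => hdetS (by rw [← hTmul, Matrix.det_mul, h, mul_zero])
  have hTQ : T * T⁻¹ = 1 := Matrix.mul_nonsing_inv T (isUnit_iff_ne_zero.mpr hdetT)
  have hQT : T⁻¹ * T = 1 := Matrix.nonsing_inv_mul T (isUnit_iff_ne_zero.mpr hdetT)
  have hβ : (1 - α) • Y = S * J * S := by
    rw [sub_smul, one_smul, sub_eq_iff_eq_add]
    rw [sub_eq_iff_eq_add] at heig
    rw [add_comm (S * J * S)]
    exact heig
  have hkey : (1 - α) * ((T⁻¹ * Y * T⁻¹)^2).trace = (J * Y).trace :=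
    key_trace T Y J (1-α) hTQ hQT (by rw [hTmul]; exact hβ)
  -- continuity
  have hGc : Continuous fun θ => Gm A B θ := continuous_Gm A B hA
  have hrc : Continuous fun θ => ((Gm A B θ)ᴴ * Y * Gm A B θ) 0 0 :=
    ((hGc.matrix_conjTranspose.matrix_mul continuous_const).matrix_mul hGc).matrix_elem 0 0
  have hqc : Continuous fun θ => quad A B Λ θ := by
    unfold quad
    exact ((hGc.matrix_conjTranspose.matrix_mul continuous_const).matrix_mul hGc).matrix_elem 0 0
  have hqne : ∀ θ, quad A B Λ θ ≠ 0 := fun θ h => absurd (hq θ) (by rw [h]; simp)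
  have hcc : Continuous fun θ =>
      ((Ψ θ : ℂ) * (((Gm A B θ)ᴴ * Y * Gm A B θ) 0 0)) / (quad A B Λ θ) ^ 2 :=
    ((Complex.continuous_ofReal.comp hΨc).mul hrc).div (hqc.pow 2)
      (fun θ => pow_ne_zero 2 (hqne θ))
  have hfc : Continuous fun θ =>
      (((Ψ θ : ℂ) * (((Gm A B θ)ᴴ * Y * Gm A B θ) 0 0)) / (quad A B Λ θ) ^ 2) •
        (Gm A B θ * (Gm A B θ)ᴴ) :=
    hcc.smul (hGc.matrix_mul hGc.matrix_conjTranspose)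
  have hint : ∀ i j, IntervalIntegrable (fun θ =>
      ((((Ψ θ : ℂ) * (((Gm A B θ)ᴴ * Y * Gm A B θ) 0 0)) / (quad A B Λ θ) ^ 2) •
        (Gm A B θ * (Gm A B θ)ᴴ)) i j) volume 0 (2*π) :=
    fun i j => (hfc.matrix_elem i j).intervalIntegrable _ _
  have hJY : (J * Y).trace = sInt (fun θ => (Ψ θ : ℂ) *
      (((Gm A B θ)ᴴ * Y * Gm A B θ) 0 0) ^ 2 / (quad A B Λ θ) ^ 2) := by
    refine (trace_mInt_mul _ Y hint).trans ?_
    refine congrArg sInt (funext fun θ => ?_)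
    show ((((Ψ θ : ℂ) * (((Gm A B θ)ᴴ * Y * Gm A B θ) 0 0)) / (quad A B Λ θ) ^ 2) •
      (Gm A B θ * (Gm A B θ)ᴴ) * Y).trace = _
    rw [smul_mul_assoc, Matrix.trace_smul,
      Matrix.mul_assoc (Gm A B θ) (Gm A B θ)ᴴ Y,
      Matrix.trace_mul_comm (Gm A B θ) ((Gm A B θ)ᴴ * Y),
      Matrix.trace_fin_one, smul_eq_mul]
    ring
  -- reality of q and r
  have hqre : ∀ θ, quad A B Λ θ = (((quad A B Λ θ).re : ℝ) : ℂ) :=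
    fun θ => entry_real (Gm A B θ) Λ hΛ.1
  have hrre : ∀ θ, ((Gm A B θ)ᴴ * Y * Gm A B θ) 0 0
      = ((((Gm A B θ)ᴴ * Y * Gm A B θ) 0 0).re : ℂ) :=
    fun θ => entry_real (Gm A B θ) Y hY
  -- the real integrand
  set gR : ℝ → ℝ := fun θ => Ψ θ * (((Gm A B θ)ᴴ * Y * Gm A B θ) 0 0).re ^ 2
      / ((quad A B Λ θ).re) ^ 2 with hgRdef
  have hgc : Continuous gR := by
    rw [hgRdef]
    exact (hΨc.mul ((Complex.continuous_re.comp hrc).pow 2)).div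
      ((Complex.continuous_re.comp hqc).pow 2) (fun θ => pow_ne_zero 2 (hq θ).ne')
  have hgnn : ∀ θ, 0 ≤ gR θ := fun θ =>
    div_nonneg (mul_nonneg (hΨpos θ).le (sq_nonneg _)) (sq_nonneg _)
  have hs2 : sInt (fun θ => (Ψ θ : ℂ) *
      (((Gm A B θ)ᴴ * Y * Gm A B θ) 0 0) ^ 2 / (quad A B Λ θ) ^ 2)
      = ((sIntR gR : ℝ) : ℂ) := by
    have h1 : (fun θ => (Ψ θ : ℂ) *
        (((Gm A B θ)ᴴ * Y * Gm A B θ) 0 0) ^ 2 / (quad A B Λ θ) ^ 2)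
        = fun θ => ((gR θ : ℝ) : ℂ) := funext fun θ => by
      rw [hrre θ, hqre θ, hgRdef]
      push_cast
      ring
    rw [h1]
    unfold sInt sIntR
    rw [intervalIntegral.integral_ofReal, Complex.real_smul]
    push_cast
    ring
  -- Hermitian structure and positivity of the trace
  have hQherm : (T⁻¹).IsHermitian := by
    rw [Matrix.IsHermitian, Matrix.conjTranspose_nonsing_inv, hTps.1.eq]
  have hHherm : (T⁻¹ * Y * T⁻¹).IsHermitian := by
    rw [Matrix.IsHermitian, Matrix.conjTranspose_mul, Matrix.conjTranspose_mul,
      hQherm.eq, hY.eq, ← Matrix.mul_assoc]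
  have hHne : T⁻¹ * Y * T⁻¹ ≠ 0 := by
    intro h
    apply hY0
    have hrecon : T * (T⁻¹ * Y * T⁻¹) * T = Y := by
      simp only [← mul_assoc]
      rw [hTQ, one_mul, mul_assoc, hQT, mul_one]
    rw [← hrecon, h, mul_zero, zero_mul]
  have htrace : ((T⁻¹ * Y * T⁻¹)^2).trace
      = ((∑ i, ∑ j, Complex.normSq ((T⁻¹ * Y * T⁻¹) i j) : ℝ) : ℂ) :=
    trace_sq_hermitian _ hHherm
  have hex : ∃ i j, (T⁻¹ * Y * T⁻¹) i j ≠ 0 := by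
    by_contra hcon
    push_neg at hcon
    exact hHne (Matrix.ext fun i j => by rw [hcon i j, Matrix.zero_apply])
  obtain ⟨i0, j0, hij⟩ := hex
  have hcpos : 0 < ∑ i, ∑ j, Complex.normSq ((T⁻¹ * Y * T⁻¹) i j) := by
    refine Finset.sum_pos' (fun i _ => Finset.sum_nonneg fun j _ => Complex.normSq_nonneg _)
      ⟨i0, Finset.mem_univ _, ?_⟩
    exact Finset.sum_pos' (fun j _ => Complex.normSq_nonneg _)
      ⟨j0, Finset.mem_univ _, Complex.normSq_pos.mpr hij⟩
  have hmain : (1 - α) * ((∑ i, ∑ j, Complex.normSq ((T⁻¹ * Y * T⁻¹) i j) : ℝ) : ℂ)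
      = ((sIntR gR : ℝ) : ℂ) := by
    rw [← htrace, hkey, hJY, hs2]
  have hsR0 : 0 ≤ sIntR gR := by
    unfold sIntR
    exact mul_nonneg (by positivity)
      (intervalIntegral.integral_nonneg (by positivity) fun u _ => hgnn u)
  have hcC : ((∑ i, ∑ j, Complex.normSq ((T⁻¹ * Y * T⁻¹) i j) : ℝ) : ℂ) ≠ 0 := by
    exact_mod_cast hcpos.ne'
  have h1α : (1 : ℂ) - α
      = (((sIntR gR / ∑ i, ∑ j, Complex.normSq ((T⁻¹ * Y * T⁻¹) i j) : ℝ)) : ℂ) := by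
    rw [Complex.ofReal_div, eq_div_iff hcC]
    exact hmain
  have hα : α = (((1 - sIntR gR / ∑ i, ∑ j, Complex.normSq ((T⁻¹ * Y * T⁻¹) i j) : ℝ)) : ℂ) := by
    rw [Complex.ofReal_sub, Complex.ofReal_one, ← h1α]
    ring
  have hdivnn : 0 ≤ sIntR gR / ∑ i, ∑ j, Complex.normSq ((T⁻¹ * Y * T⁻¹) i j) :=
    div_nonneg hsR0 hcpos.le
  refine ⟨by rw [hα]; exact Complex.ofReal_im _, hkey.trans hJY, ?_, ?_⟩
  · rw [hα, Complex.ofReal_re]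
    linarith
  · constructor
    · intro h1
      rw [hα] at h1
      have hreal : (1 - sIntR gR / ∑ i, ∑ j, Complex.normSq ((T⁻¹ * Y * T⁻¹) i j)) = 1 := by
        exact_mod_cast h1
      have hsr : sIntR gR / ∑ i, ∑ j, Complex.normSq ((T⁻¹ * Y * T⁻¹) i j) = 0 := by
        linarith
      have hs0 : sIntR gR = 0 :=
        (div_eq_zero_iff.mp hsr).resolve_right hcpos.ne'
      have hint0 : (∫ θ in (0:ℝ)..(2*π), gR θ) = 0 := by
        unfold sIntR at hs0
        rcases mul_eq_zero.mp hs0 with h | h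
        · exact absurd h (by positivity)
        · exact h
      have hae := (intervalIntegral.integral_eq_zero_iff_of_le_of_nonneg_ae
        (by positivity) (Filter.Eventually.of_forall fun θ => hgnn θ)
        (hgc.intervalIntegrable _ _)).mp hint0
      have hzero : Set.EqOn gR 0 (Set.Ioc 0 (2*π)) :=
        MeasureTheory.Measure.eqOn_Ioc_of_ae_eq (μ := volume) hae hgc.continuousOn continuousOn_const
      have hrzero : ∀ θ ∈ Set.Ioc (0:ℝ) (2*π),
          (((Gm A B θ)ᴴ * Y * Gm A B θ) 0 0).re = 0 := by
        intro θ hθ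
        have hg0 : gR θ = 0 := hzero hθ
        rw [hgRdef] at hg0
        have h2 : Ψ θ * (((Gm A B θ)ᴴ * Y * Gm A B θ) 0 0).re ^ 2 = 0 :=
          (div_eq_zero_iff.mp hg0).resolve_right (pow_ne_zero 2 (hq θ).ne')
        have h3 : (((Gm A B θ)ᴴ * Y * Gm A B θ) 0 0).re ^ 2 = 0 :=
          (mul_eq_zero.mp h2).resolve_left (hΨpos θ).ne'
        exact (pow_eq_zero_iff two_ne_zero).mp h3
      have hper : ∀ x : ℝ, Gm A B (x + 2*π) = Gm A B x := fun x => by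
        unfold Gm; rw [circPt_periodic]
      have hperR : Function.Periodic
          (fun θ => (((Gm A B θ)ᴴ * Y * Gm A B θ) 0 0).re) (2*π) := by
        intro x
        simp only
        rw [hper x]
      have hall : ∀ θ, (((Gm A B θ)ᴴ * Y * Gm A B θ) 0 0).re = 0 := by
        intro θ
        have hmem := toIocMod_mem_Ioc (by positivity : (0:ℝ) < 2*π) 0 θ
        rw [zero_add] at hmem
        have heq2 : (((Gm A B (toIocMod (by positivity : (0:ℝ) < 2*π) 0 θ))ᴴ * Y *
            Gm A B (toIocMod (by positivity : (0:ℝ) < 2*π) 0 θ)) 0 0).re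
            = (((Gm A B θ)ᴴ * Y * Gm A B θ) 0 0).re := by
          rw [toIocMod]
          exact hperR.sub_zsmul_eq _
        rw [← heq2]
        exact hrzero _ hmem
      intro θ
      ext i j
      have hi : i = 0 := Subsingleton.elim i 0
      have hj : j = 0 := Subsingleton.elim j 0
      subst hi; subst hj
      rw [Matrix.zero_apply, hrre θ, hall θ]
      simp
    · intro hGYG
      have hgR0 : ∀ θ, gR θ = 0 := by
        intro θ
        rw [hgRdef]
        simp only
        rw [hGYG θ, Matrix.zero_apply]
        simp
      have hs0 : sIntR gR = 0 := by
        unfold sIntR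
        rw [show (fun θ => gR θ) = (fun _ : ℝ => (0:ℝ)) from funext hgR0]
        simp
      rw [hα, hs0]
      norm_num
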